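/- Let x ∈ ℂ^{√n × √n} and let x̂ denote its 2D DFT. Fix shifts (τ_r, τ_c) ∈ [√n]² and divisors B_r, B_c of √n, and define y ∈ ℂ^{B_r × B_c} by y_{i,j} = x_{i(√n/B_r)+τ_r, j(√n/B_c)+τ_c}. Then the 2D DFT ŷ of y satisfies ŷ_{i,j} = Σ_{l ∈ [√n/B_r]} Σ_{m ∈ [√n/B_c]} x̂_{lB_r+i, mB_c+j} · ω^{−τ_r(i+lB_r) − τ_c(j+mB_c)}, where ω = e^{−2πi/√n}. -/

import Mathlib

open Finset

lemma exp_prim (s : ℕ) (hs : 0 < s) :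
    IsPrimitiveRoot (Complex.exp (-(2 * Real.pi * Complex.I) / s)) s := by
  have h := (Complex.isPrimitiveRoot_exp s hs.ne').inv
  have he : Complex.exp (-(2 * Real.pi * Complex.I) / s)
      = (Complex.exp (2 * Real.pi * Complex.I / s))⁻¹ := by
    rw [← Complex.exp_neg]; ring_nf
  rw [he]; exact h

lemma zpow_sub_dvd {s : ℕ} {ω : ℂ} (hω : ω ≠ 0) (hs1 : ω ^ (s : ℤ) = 1) {a b : ℤ}
    (h : (s : ℤ) ∣ a - b) : ω ^ a = ω ^ b := by
  obtain ⟨k, hk⟩ := h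
  have ha : a = b + (s : ℤ) * k := by linarith
  rw [ha, zpow_add₀ hω, zpow_mul, hs1, one_zpow, mul_one]

lemma orth {s B q : ℕ} (hq : 0 < q) (hB : 0 < B) (hsq : s = B * q)
    {ω : ℂ} (hprim : IsPrimitiveRoot ω s) (t : ℤ) :
    ∑ l ∈ range q, ω ^ ((B : ℤ) * t * (l : ℤ)) = if (q : ℤ) ∣ t then (q : ℂ) else 0 := by
  have hs : 0 < s := hsq ▸ Nat.mul_pos hB hq
  have hω : ω ≠ 0 := hprim.ne_zero hs.ne'
  have hterm : ∀ l ∈ range q, ω ^ ((B : ℤ) * t * (l : ℤ)) = (ω ^ ((B:ℤ)*t)) ^ l := by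
    intro l _
    rw [zpow_mul, zpow_natCast]
  rw [Finset.sum_congr rfl hterm]
  have hone : ω ^ ((B:ℤ)*t) = 1 ↔ (q : ℤ) ∣ t := by
    rw [hprim.zpow_eq_one_iff_dvd]
    constructor
    · rintro ⟨k, hk⟩
      refine ⟨k, ?_⟩
      have hB' : (B : ℤ) ≠ 0 := by exact_mod_cast hB.ne'
      have : (B:ℤ) * t = (B:ℤ) * ((q:ℤ) * k) := by push_cast [hsq] at hk ⊢; linarith
      exact mul_left_cancel₀ hB' this
    · rintro ⟨k, hk⟩
      exact ⟨k, by push_cast [hsq]; rw [hk]; ring⟩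
  by_cases h : (q : ℤ) ∣ t
  · rw [if_pos h]
    rw [Finset.sum_congr rfl (fun l _ => by rw [hone.mpr h, one_pow])]
    simp
  · rw [if_neg h]
    have hne : ω ^ ((B:ℤ)*t) ≠ 1 := fun hc => h (hone.mp hc)
    rw [geom_sum_eq hne]
    have : (ω ^ ((B:ℤ)*t)) ^ q = 1 := by
      rw [← zpow_natCast, ← zpow_mul]
      have : (B:ℤ) * t * q = (s:ℤ) * t := by push_cast [hsq]; ring
      rw [this, zpow_mul, zpow_natCast, hprim.pow_eq_one, one_zpow]
    rw [this, sub_self, zero_div]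

lemma fold1 {s B q τ : ℕ} (hq : 0 < q) (hB : 0 < B) (hsq : s = B * q) (hτ : τ < s)
    {ω : ℂ} (hprim : IsPrimitiveRoot ω s) (i : ℕ) (f : ℕ → ℂ) :
    ∑ u ∈ range s,
        (∑ l ∈ range q, ω ^ (((l : ℤ) * B + i) * u - τ * (i + (l : ℤ) * B))) * f u
      = q * ∑ l ∈ range B, ω ^ ((q : ℤ) * (i * l)) * f ((l * q + τ) % s) := by
  have hs : 0 < s := hsq ▸ Nat.mul_pos hB hq
  have hω : ω ≠ 0 := hprim.ne_zero hs.ne'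
  have hs1 : ω ^ (s : ℤ) = 1 := by rw [zpow_natCast, hprim.pow_eq_one]
  have hstep1 : ∀ u : ℕ,
      (∑ l ∈ range q, ω ^ (((l : ℤ) * B + i) * u - τ * (i + (l : ℤ) * B))) * f u
      = if (q : ℤ) ∣ (u : ℤ) - τ then (q : ℂ) * (ω ^ ((i : ℤ) * ((u : ℤ) - τ)) * f u) else 0 := by
    intro u
    have h1 : ∀ l ∈ range q, ω ^ (((l : ℤ) * B + i) * u - τ * (i + (l : ℤ) * B))
        = ω ^ ((i : ℤ) * ((u : ℤ) - τ)) * ω ^ ((B : ℤ) * ((u : ℤ) - τ) * (l : ℤ)) := by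
      intro l _
      rw [← zpow_add₀ hω]
      congr 1
      ring
    rw [Finset.sum_congr rfl h1, ← Finset.mul_sum, orth hq hB hsq hprim ((u : ℤ) - τ)]
    by_cases h : (q : ℤ) ∣ (u : ℤ) - τ
    · rw [if_pos h, if_pos h]; ring
    · rw [if_neg h, if_neg h]; ring
  rw [Finset.sum_congr rfl (fun u _ => hstep1 u)]
  set φ : ℕ → ℕ := fun l => (l * q + τ) % s with hφ
  have himg : Finset.image φ (range B) ⊆ range s := by
    intro u hu
    simp only [Finset.mem_image, Finset.mem_range] at hu ⊢
    obtain ⟨l, _, rfl⟩ := hu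
    exact Nat.mod_lt _ hs
  have hqs : q ∣ s := Dvd.intro_left B hsq.symm
  have hzero : ∀ u ∈ range s, u ∉ Finset.image φ (range B) →
      (if (q : ℤ) ∣ (u : ℤ) - τ then (q : ℂ) * (ω ^ ((i : ℤ) * ((u : ℤ) - τ)) * f u) else 0) = 0 := by
    intro u hu hnu
    rw [if_neg]
    intro hdvd
    apply hnu
    simp only [Finset.mem_image, Finset.mem_range]
    have hust : q ∣ (u + s - τ) := by
      have h1 : ((u + s - τ : ℕ) : ℤ) = (u : ℤ) - τ + s := by
        have : τ ≤ u + s := by omega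
        push_cast [this]; ring
      have h2 : (q : ℤ) ∣ ((u + s - τ : ℕ) : ℤ) := by
        rw [h1]; exact dvd_add hdvd (by exact_mod_cast hqs)
      exact_mod_cast h2
    obtain ⟨l0, hl0⟩ := hust
    refine ⟨l0 % B, Nat.mod_lt _ hB, ?_⟩
    have hl0' : l0 * q + τ = u + s := by
      have : u + s - τ = l0 * q := by rw [hl0, mul_comm]
      omega
    have hmeq : (l0 % B) * q + τ ≡ u [MOD s] := by
      calc (l0 % B) * q + τ ≡ l0 * q + τ [MOD s] := by
            apply Nat.ModEq.add_right
            rw [hsq]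
            exact (Nat.mod_modEq l0 B).mul_right' q
        _ = u + s := hl0'
        _ ≡ u [MOD s] := (Nat.add_modEq_right (n := s) (a := u))
    have hus : u < s := Finset.mem_range.mp hu
    have h2 : (l0 % B * q + τ) % s = u % s := hmeq
    simp only [hφ]
    rw [Nat.mod_eq_of_lt hus] at h2
    exact h2
  have hinj : Set.InjOn φ (range B) := by
    intro l1 h1 l2 h2 heq
    simp only [Finset.coe_range, Set.mem_Iio] at h1 h2
    have hmeq : l1 * q + τ ≡ l2 * q + τ [MOD s] := heq
    have hdvd : (s : ℤ) ∣ ((l2 : ℤ) * q + τ) - ((l1 : ℤ) * q + τ) := by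
      have := hmeq.dvd
      push_cast at this ⊢
      convert this using 1
    have hdvd2 : ((B : ℤ) * q) ∣ ((l2 : ℤ) - l1) * q := by
      have h3 : ((l2 : ℤ) * q + τ) - ((l1 : ℤ) * q + τ) = ((l2 : ℤ) - l1) * q := by ring
      rw [h3] at hdvd
      have hcast : ((s : ℕ) : ℤ) = (B : ℤ) * q := by push_cast [hsq]; ring
      rwa [hcast] at hdvd
    have hq' : (q : ℤ) ≠ 0 := by exact_mod_cast hq.ne'
    have hBd : (B : ℤ) ∣ (l2 : ℤ) - l1 := by
      obtain ⟨k, hk⟩ := hdvd2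
      refine ⟨k, ?_⟩
      have : ((l2 : ℤ) - l1) * q = (B : ℤ) * k * q := by rw [hk]; ring
      exact mul_right_cancel₀ hq' this
    obtain ⟨k, hk⟩ := hBd
    have hkabs : (B : ℤ) * |k| < B := by
      have habs : |(l2 : ℤ) - l1| < B := by
        rw [abs_lt]; constructor <;> [omega; omega]
      calc (B : ℤ) * |k| = |(B : ℤ) * k| := by
            rw [abs_mul, abs_of_nonneg (by positivity : (0:ℤ) ≤ (B:ℤ))]
        _ = |(l2 : ℤ) - l1| := by rw [hk]
        _ < B := habs
    have hk0 : k = 0 := by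
      by_contra hk0
      have : (1 : ℤ) ≤ |k| := Int.one_le_abs (by omega)
      nlinarith
    rw [hk0, mul_zero] at hk
    omega
  rw [← Finset.sum_subset himg hzero, Finset.sum_image hinj]
  rw [Finset.mul_sum]
  apply Finset.sum_congr rfl
  intro l hl
  have hcond : (q : ℤ) ∣ (↑(φ l) : ℤ) - τ := by
    have h1 : φ l % q = τ % q := by
      simp only [hφ]
      rw [Nat.mod_mod_of_dvd _ hqs, add_comm, Nat.add_mul_mod_self_right]
    have hmeq : φ l ≡ τ [MOD q] := h1
    exact hmeq.symm.dvd
  rw [if_pos hcond]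
  have hpow : ω ^ ((i : ℤ) * ((↑(φ l) : ℤ) - τ)) = ω ^ ((q : ℤ) * (i * l)) := by
    apply zpow_sub_dvd hω hs1
    have hd : (s : ℤ) ∣ (↑(φ l) : ℤ) - ((l : ℤ) * q + τ) := by
      have h := (Nat.mod_modEq (l * q + τ) s).symm.dvd
      simp only [hφ]
      push_cast at h ⊢
      convert h using 1
    have h2 : (i : ℤ) * ((↑(φ l) : ℤ) - τ) - (q : ℤ) * (i * l)
        = (i : ℤ) * ((↑(φ l) : ℤ) - ((l : ℤ) * q + τ)) := by ring
    rw [h2]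
    exact Dvd.dvd.mul_left hd _
  rw [hpow]

lemma fold2 {s Br qr Bc qc τr τc : ℕ} (hqr : 0 < qr) (hqc : 0 < qc)
    (hBr : 0 < Br) (hBc : 0 < Bc) (hsr : s = Br * qr) (hsc : s = Bc * qc)
    (hτr : τr < s) (hτc : τc < s)
    {ω : ℂ} (hprim : IsPrimitiveRoot ω s) (i j : ℕ) (x : ℕ → ℕ → ℂ) :
    ∑ l ∈ range qr, ∑ m ∈ range qc,
        (∑ u ∈ range s, ∑ v ∈ range s,
            ω ^ ((l * Br + i) * u + (m * Bc + j) * v) * x u v) *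
          ω ^ (-(((τr * (i + l * Br) + τc * (j + m * Bc)) : ℕ) : ℤ))
      = ((qr : ℂ) * qc) * ∑ l ∈ range Br, ∑ m ∈ range Bc,
          ω ^ ((qr : ℤ) * (i * l)) * ω ^ ((qc : ℤ) * (j * m)) *
            x ((l * qr + τr) % s) ((m * qc + τc) % s) := by
  have hs : 0 < s := hsr ▸ Nat.mul_pos hBr hqr
  have hω0 : ω ≠ 0 := hprim.ne_zero hs.ne'
  calc
    ∑ l ∈ range qr, ∑ m ∈ range qc,
        (∑ u ∈ range s, ∑ v ∈ range s,
            ω ^ ((l * Br + i) * u + (m * Bc + j) * v) * x u v) *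
          ω ^ (-(((τr * (i + l * Br) + τc * (j + m * Bc)) : ℕ) : ℤ))
      = ∑ l ∈ range qr, ∑ m ∈ range qc, ∑ u ∈ range s, ∑ v ∈ range s,
          ω ^ (((l : ℤ) * Br + i) * u - τr * (i + (l : ℤ) * Br)) *
            (ω ^ (((m : ℤ) * Bc + j) * v - τc * (j + (m : ℤ) * Bc)) * x u v) := by
        refine sum_congr rfl fun l _ => sum_congr rfl fun m _ => ?_
        rw [Finset.sum_mul]
        refine sum_congr rfl fun u _ => ?_
        rw [Finset.sum_mul]
        refine sum_congr rfl fun v _ => ?_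
        rw [← zpow_natCast ω ((l * Br + i) * u + (m * Bc + j) * v), mul_right_comm,
          ← zpow_add₀ hω0]
        have he : (((l * Br + i) * u + (m * Bc + j) * v : ℕ) : ℤ) +
            (-(((τr * (i + l * Br) + τc * (j + m * Bc)) : ℕ) : ℤ))
            = (((l : ℤ) * Br + i) * u - τr * (i + (l : ℤ) * Br)) +
              (((m : ℤ) * Bc + j) * v - τc * (j + (m : ℤ) * Bc)) := by push_cast; ring
        rw [he, zpow_add₀ hω0, mul_assoc]
    _ = ∑ u ∈ range s, ∑ l ∈ range qr, ∑ v ∈ range s, ∑ m ∈ range qc,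
          ω ^ (((l : ℤ) * Br + i) * u - τr * (i + (l : ℤ) * Br)) *
            (ω ^ (((m : ℤ) * Bc + j) * v - τc * (j + (m : ℤ) * Bc)) * x u v) := by
        rw [Finset.sum_congr rfl fun l _ => Finset.sum_comm, Finset.sum_comm]
        exact Finset.sum_congr rfl fun u _ => Finset.sum_congr rfl fun l _ => Finset.sum_comm
    _ = ∑ u ∈ range s,
          (∑ l ∈ range qr, ω ^ (((l : ℤ) * Br + i) * u - τr * (i + (l : ℤ) * Br))) *
            (∑ v ∈ range s,
              (∑ m ∈ range qc, ω ^ (((m : ℤ) * Bc + j) * v - τc * (j + (m : ℤ) * Bc))) *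
                x u v) := by
        refine sum_congr rfl fun u _ => ?_
        rw [Finset.sum_mul]
        refine sum_congr rfl fun l _ => ?_
        rw [Finset.mul_sum]
        refine sum_congr rfl fun v _ => ?_
        rw [Finset.sum_mul, Finset.mul_sum]
    _ = (qr : ℂ) * ∑ l ∈ range Br, ω ^ ((qr : ℤ) * (i * l)) *
          (∑ v ∈ range s,
            (∑ m ∈ range qc, ω ^ (((m : ℤ) * Bc + j) * v - τc * (j + (m : ℤ) * Bc))) *
              x ((l * qr + τr) % s) v) :=
        fold1 hqr hBr hsr hτr hprim i _
    _ = (qr : ℂ) * ∑ l ∈ range Br, ω ^ ((qr : ℤ) * (i * l)) *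
          ((qc : ℂ) * ∑ m ∈ range Bc, ω ^ ((qc : ℤ) * (j * m)) *
            x ((l * qr + τr) % s) ((m * qc + τc) % s)) := by
        refine congrArg _ (sum_congr rfl fun l _ => ?_)
        rw [fold1 hqc hBc hsc hτc hprim j (fun v => x ((l * qr + τr) % s) v)]
    _ = ((qr : ℂ) * qc) * ∑ l ∈ range Br, ∑ m ∈ range Bc,
          ω ^ ((qr : ℤ) * (i * l)) * ω ^ ((qc : ℤ) * (j * m)) *
            x ((l * qr + τr) % s) ((m * qc + τc) % s) := by
        simp only [Finset.mul_sum]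
        exact sum_congr rfl fun l _ => sum_congr rfl fun m _ => by ring

/-- Subsampling an `s × s` signal (`s = √n`) in the time domain with shifts
`(τr, τc)` and ratios `(s/Br, s/Bc)` folds (aliases) the spectrum: if
`y i j = x (i(s/Br)+τr) (j(s/Bc)+τc)` (indices mod `s`), then the 2D DFT `ŷ` of `y`
(computed with the appropriate normalization) satisfies
`ŷ i j = Σ_{l<s/Br} Σ_{m<s/Bc} x̂ (lBr+i) (mBc+j) · ω^{−τr(i+lBr)−τc(j+mBc)}`,
where `ω = e^{−2πi/s}` and `x̂` is the 2D DFT of `x` normalized by `1/√n = 1/s`. -/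
theorem stmt10 (s Br Bc τr τc : ℕ) (hs : 0 < s) (hBr : 0 < Br) (hBc : 0 < Bc)
    (hBrs : Br ∣ s) (hBcs : Bc ∣ s) (hτr : τr < s) (hτc : τc < s)
    (ω ωr ωc : ℂ)
    (hω : ω = Complex.exp (-(2 * Real.pi * Complex.I) / s))
    (hωr : ωr = Complex.exp (-(2 * Real.pi * Complex.I) / Br))
    (hωc : ωc = Complex.exp (-(2 * Real.pi * Complex.I) / Bc))
    (x xhat y yhat : ℕ → ℕ → ℂ)
    (hxhat : ∀ i j, xhat i j =
      (1 / (s : ℂ)) * ∑ l ∈ range s, ∑ m ∈ range s, ω ^ (i * l + j * m) * x l m)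
    (hy : ∀ i j, y i j = x ((i * (s / Br) + τr) % s) ((j * (s / Bc) + τc) % s))
    (hyhat : ∀ i j, yhat i j =
      ((s : ℂ) / ((Br : ℂ) * (Bc : ℂ))) *
        ∑ l ∈ range Br, ∑ m ∈ range Bc, ωr ^ (i * l) * ωc ^ (j * m) * y l m)
    (i j : ℕ) (hi : i < Br) (hj : j < Bc) :
    yhat i j = ∑ l ∈ range (s / Br), ∑ m ∈ range (s / Bc),
      xhat (l * Br + i) (m * Bc + j) *
        ω ^ (-(((τr * (i + l * Br) + τc * (j + m * Bc)) : ℕ) : ℤ)) := by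
  set qr := s / Br with hqrdef
  set qc := s / Bc with hqcdef
  have hsr : s = Br * qr := (Nat.mul_div_cancel' hBrs).symm
  have hsc : s = Bc * qc := (Nat.mul_div_cancel' hBcs).symm
  have hqr0 : 0 < qr := Nat.div_pos (Nat.le_of_dvd hs hBrs) hBr
  have hqc0 : 0 < qc := Nat.div_pos (Nat.le_of_dvd hs hBcs) hBc
  have hprim : IsPrimitiveRoot ω s := by rw [hω]; exact exp_prim s hs
  have hω0 : ω ≠ 0 := hprim.ne_zero hs.ne'
  have hs0 : (s : ℂ) ≠ 0 := Nat.cast_ne_zero.mpr hs.ne'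
  have hBr0 : (Br : ℂ) ≠ 0 := Nat.cast_ne_zero.mpr hBr.ne'
  have hBc0 : (Bc : ℂ) ≠ 0 := Nat.cast_ne_zero.mpr hBc.ne'
  have hsC1 : (s : ℂ) = (Br : ℂ) * qr := by exact_mod_cast congrArg (Nat.cast (R := ℂ)) hsr
  have hsC2 : (s : ℂ) = (Bc : ℂ) * qc := by exact_mod_cast congrArg (Nat.cast (R := ℂ)) hsc
  -- ωr, ωc as powers of ω
  have hwr : ωr = ω ^ qr := by
    rw [hωr, hω, ← Complex.exp_nat_mul]
    congr 1
    field_simp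
    linear_combination (-1 : ℂ) * hsC1
  have hwc : ωc = ω ^ qc := by
    rw [hωc, hω, ← Complex.exp_nat_mul]
    congr 1
    field_simp
    linear_combination (-1 : ℂ) * hsC2
  have hωrpow : ∀ a : ℕ, ωr ^ a = ω ^ ((qr : ℤ) * a) := by
    intro a
    rw [hwr, ← pow_mul, ← zpow_natCast ω (qr * a)]
    congr 1
  have hωcpow : ∀ a : ℕ, ωc ^ a = ω ^ ((qc : ℤ) * a) := by
    intro a
    rw [hwc, ← pow_mul, ← zpow_natCast ω (qc * a)]
    congr 1
  -- expand the RHS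
  have hR : ∑ l ∈ range qr, ∑ m ∈ range qc,
      xhat (l * Br + i) (m * Bc + j) *
        ω ^ (-(((τr * (i + l * Br) + τc * (j + m * Bc)) : ℕ) : ℤ))
      = (1 / (s : ℂ)) * ∑ l ∈ range qr, ∑ m ∈ range qc,
          (∑ u ∈ range s, ∑ v ∈ range s,
            ω ^ ((l * Br + i) * u + (m * Bc + j) * v) * x u v) *
          ω ^ (-(((τr * (i + l * Br) + τc * (j + m * Bc)) : ℕ) : ℤ)) := by
    rw [Finset.mul_sum]
    refine sum_congr rfl fun l _ => ?_
    rw [Finset.mul_sum]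
    refine sum_congr rfl fun m _ => ?_
    rw [hxhat]
    ring
  rw [hR, fold2 hqr0 hqc0 hBr hBc hsr hsc hτr hτc hprim i j x, hyhat]
  have hterm : ∀ l m : ℕ, ωr ^ (i * l) * ωc ^ (j * m) * y l m
      = ω ^ ((qr : ℤ) * (i * l)) * ω ^ ((qc : ℤ) * (j * m)) *
          x ((l * qr + τr) % s) ((m * qc + τc) % s) := by
    intro l m
    rw [hy, hωrpow, hωcpow]
    push_cast
    ring
  rw [Finset.sum_congr rfl fun l _ => Finset.sum_congr rfl fun m _ => hterm l m]
  rw [← mul_assoc]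
  congr 1
  field_simp
  linear_combination ((Br : ℂ) * qr) * hsC2 + (s : ℂ) * hsC1
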